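/- Let π^E be a deterministic policy in an episodic MDP with rewards r_h(s,a) ∈ [0,1], with expert action a^E_h(s) at state s and step h. Then for any policy π, V(π^E) − V(π) ≤ H · Σ_{h=1}^H Σ_s d^{π^E}_h(s) (1 − π_h(a^E_h(s)|s)), where d^{π^E}_h(s) = Σ_a d^{π^E}_h(s,a). -/
import Mathlib


open Finset

/-- An episodic MDP `M = (S, A, P, r, H, ρ)` with finite state space `S`, finite action
space `A`, horizon `H`, initial state distribution `ρ`, non-stationary transitions `P` and
rewards `r` taking values in `[0,1]`.  Time steps are indexed by `0, 1, …, H-1`. -/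
structure MDP (S A : Type) [Fintype S] [Fintype A] where
  H : ℕ
  ρ : S → ℝ
  P : ℕ → S → A → S → ℝ
  r : ℕ → S → A → ℝ
  ρ_nonneg : ∀ s, 0 ≤ ρ s
  ρ_sum : ∑ s, ρ s = 1
  P_nonneg : ∀ h s a s', 0 ≤ P h s a s'
  P_sum : ∀ h s a, ∑ s', P h s a s' = 1
  r_nonneg : ∀ h s a, 0 ≤ r h s a
  r_le_one : ∀ h s a, r h s a ≤ 1

variable {S A : Type} [Fintype S] [Fintype A] [DecidableEq S] [DecidableEq A]

/-- A (time-dependent, stochastic) policy: `π h s a` is the probability of action `a`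
at state `s` in step `h`. -/
def IsPolicy (π : ℕ → S → A → ℝ) : Prop :=
  (∀ h s a, 0 ≤ π h s a) ∧ (∀ h s, ∑ a, π h s a = 1)

/-- A deterministic policy: at each step and state it puts all mass on a single action. -/
def IsDetPolicy (π : ℕ → S → A → ℝ) : Prop :=
  ∃ f : ℕ → S → A, ∀ h s a, π h s a = if a = f h s then 1 else 0

/-- The state distribution `d^π_h(s)` of policy `π` at step `h`. -/
noncomputable def dState (M : MDP S A) (π : ℕ → S → A → ℝ) : ℕ → S → ℝ
  | 0 => M.ρ
  | h + 1 => fun s' => ∑ s, ∑ a, dState M π h s * π h s a * M.P h s a s'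

/-- The state-action distribution `d^π_h(s, a)` of policy `π` at step `h`. -/
noncomputable def dSA (M : MDP S A) (π : ℕ → S → A → ℝ) (h : ℕ) (s : S) (a : A) : ℝ :=
  dState M π h s * π h s a

/-- The policy value `V(π) = E[Σ_{h} r_h(s_h, a_h)] = Σ_h Σ_{(s,a)} d^π_h(s,a) r_h(s,a)`. -/
noncomputable def value (M : MDP S A) (π : ℕ → S → A → ℝ) : ℝ :=
  ∑ h ∈ Finset.range M.H, ∑ s, ∑ a, dSA M π h s a * M.r h s a

/-- Probability that rolling out policy `π` in MDP `M` produces trajectory `tr`. -/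
noncomputable def trajProb (M : MDP S A) (π : ℕ → S → A → ℝ) (tr : Fin M.H → S × A) : ℝ :=
  ∏ h : Fin M.H,
    ((if (h : ℕ) = 0 then M.ρ (tr h).1 else 1) * π h (tr h).1 (tr h).2 *
      (if hh : (h : ℕ) + 1 < M.H then M.P h (tr h).1 (tr h).2 (tr ⟨(h : ℕ) + 1, hh⟩).1 else 1))

/-- A labeled dataset of `N` trajectories of length `H`; the Boolean label records whether
the trajectory was generated by the expert (`true`) or by the behavior policy (`false`).
The expert dataset `D^E` is the sub-dataset labeled `true`, the supplementary dataset `D^S`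
is the sub-dataset labeled `false`, and the union dataset `D^U` is the whole dataset. -/
abbrev Dataset (S A : Type) (H N : ℕ) := Fin N → (Fin H → S × A) × Bool

/-- Probability of observing the labeled dataset `D` under Assumption 1 (each of the `N`
trajectories is independently rolled out from the expert `πE` with probability `η` and
from the behavior policy `πβ` with probability `1 - η`). -/
noncomputable def datasetProb (M : MDP S A) (πE πβ : ℕ → S → A → ℝ) (η : ℝ) {N : ℕ}
    (D : Dataset S A M.H N) : ℝ :=
  ∏ i, (if (D i).2 then η * trajProb M πE (D i).1 else (1 - η) * trajProb M πβ (D i).1)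

/-- Expectation of `f` over the randomness of the dataset collection (Assumption 1). -/
noncomputable def expect (M : MDP S A) (πE πβ : ℕ → S → A → ℝ) (η : ℝ) (N : ℕ)
    (f : Dataset S A M.H N → ℝ) : ℝ :=
  ∑ D : Dataset S A M.H N, datasetProb M πE πβ η D * f D

/-- Whether the step-`h` state-action pair of trajectory `tr` equals `(s, a)`. -/
def hit {H : ℕ} (tr : Fin H → S × A) (h : ℕ) (s : S) (a : A) : Bool :=
  if hh : h < H then decide (tr ⟨h, hh⟩ = (s, a)) else false

/-- `n_h(s, a)`: the number of trajectories of `D` (among those whose label is selected by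
`keep`) whose step-`h` state-action pair is `(s, a)`. -/
def countSA {H N : ℕ} (D : Dataset S A H N) (keep : Bool → Bool) (h : ℕ) (s : S) (a : A) : ℕ :=
  (Finset.univ.filter fun i : Fin N => (keep (D i).2 && hit (D i).1 h s a) = true).card

/-- The behavioral cloning policy determined by counts `n`:
`π_h(a|s) = n_h(s,a)/n_h(s)` if `n_h(s) > 0` and `1/|A|` otherwise. -/
noncomputable def bcFromCounts (n : ℕ → S → A → ℕ) : ℕ → S → A → ℝ := fun h s a =>
  if 0 < ∑ a', n h s a' then (n h s a : ℝ) / (∑ a', (n h s a' : ℝ))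
  else 1 / (Fintype.card A : ℝ)

/-- The behavioral cloning policy of the sub-dataset of `D` selected by `keep`
(`keep = fun b => b` gives BC on the expert dataset `D^E`;
 `keep = fun _ => true` gives BC on the union dataset `D^U`, i.e., NBCU). -/
noncomputable def bcPolicy {H N : ℕ} (D : Dataset S A H N) (keep : Bool → Bool) :
    ℕ → S → A → ℝ :=
  bcFromCounts (fun h s a => countSA D keep h s a)


section AuxPD

variable {S A : Type} [Fintype S] [Fintype A] [DecidableEq S] [DecidableEq A]

lemma dState_nonneg (M : MDP S A) (π : ℕ → S → A → ℝ)
    (hπ : ∀ h s a, 0 ≤ π h s a) : ∀ h s, 0 ≤ dState M π h s := by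
  intro h
  induction h with
  | zero => exact M.ρ_nonneg
  | succ h ih =>
    intro s'
    apply Finset.sum_nonneg; intro s _
    apply Finset.sum_nonneg; intro a _
    exact mul_nonneg (mul_nonneg (ih s) (hπ h s a)) (M.P_nonneg h s a s')

lemma dState_sum_one (M : MDP S A) (π : ℕ → S → A → ℝ)
    (hπ : ∀ h s, ∑ a, π h s a = 1) : ∀ h, ∑ s, dState M π h s = 1 := by
  intro h
  induction h with
  | zero => exact M.ρ_sum
  | succ h ih =>
    show (∑ s' : S, ∑ s, ∑ a, dState M π h s * π h s a * M.P h s a s') = 1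
    rw [Finset.sum_comm]
    calc (∑ s : S, ∑ s' : S, ∑ a, dState M π h s * π h s a * M.P h s a s')
        = ∑ s : S, ∑ a, dState M π h s * π h s a := by
          refine Finset.sum_congr rfl fun s _ => ?_
          rw [Finset.sum_comm]
          refine Finset.sum_congr rfl fun a _ => ?_
          rw [← Finset.mul_sum, M.P_sum, mul_one]
      _ = ∑ s : S, dState M π h s := by
          refine Finset.sum_congr rfl fun s _ => ?_
          rw [← Finset.mul_sum, hπ h s, mul_one]
      _ = 1 := ih

lemma det_is_policy (πE : ℕ → S → A → ℝ) (aE : ℕ → S → A)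
    (hdet : ∀ h s a, πE h s a = if a = aE h s then 1 else 0) : IsPolicy πE := by
  constructor
  · intro h s a; rw [hdet]; split <;> norm_num
  · intro h s
    simp only [hdet]
    rw [Finset.sum_ite_eq' Finset.univ (aE h s) (fun _ => (1:ℝ))]
    simp

lemma abs_sum_det (π : ℕ → S → A → ℝ) (aE : ℕ → S → A) (h : ℕ) (s : S)
    (hπ : IsPolicy π) :
    ∑ a, |(if a = aE h s then (1:ℝ) else 0) - π h s a| = 2 * (1 - π h s (aE h s)) := by
  have hle : ∀ a, π h s a ≤ 1 := by
    intro a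
    rw [← hπ.2 h s]
    exact Finset.single_le_sum (fun a' _ => hπ.1 h s a') (Finset.mem_univ a)
  have : ∀ a, |(if a = aE h s then (1:ℝ) else 0) - π h s a|
      = (if a = aE h s then (1:ℝ) - π h s a else π h s a) := by
    intro a
    split
    · rw [abs_of_nonneg]; linarith [hle a]
    · rw [zero_sub, abs_neg, abs_of_nonneg (hπ.1 h s a)]
  rw [Finset.sum_congr rfl fun a _ => this a]
  have h2 : ∀ a, (if a = aE h s then (1:ℝ) - π h s a else π h s a)
      = (if a = aE h s then 1 - 2 * π h s a else 0) + π h s a := by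
    intro a; split <;> ring
  rw [Finset.sum_congr rfl fun a _ => h2 a, Finset.sum_add_distrib,
    Finset.sum_ite_eq' Finset.univ (aE h s) (fun a => 1 - 2 * π h s a), hπ.2 h s]
  simp only [Finset.mem_univ, if_true]
  ring

/-- TV-style recursion on the step-`h` state-action distributions. -/
lemma sa_abs_bound (M : MDP S A) (πE π : ℕ → S → A → ℝ) (aE : ℕ → S → A)
    (hdet : ∀ h s a, πE h s a = if a = aE h s then 1 else 0)
    (hπ : IsPolicy π) (h : ℕ) :
    ∑ s, ∑ a, |dState M πE h s * πE h s a - dState M π h s * π h s a| ≤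
      2 * (∑ s, dState M πE h s * (1 - π h s (aE h s)))
        + ∑ s, |dState M πE h s - dState M π h s| := by
  have hEnn := dState_nonneg M πE (det_is_policy πE aE hdet).1
  rw [Finset.mul_sum, ← Finset.sum_add_distrib]
  refine Finset.sum_le_sum fun s _ => ?_
  have key : ∀ a, |dState M πE h s * πE h s a - dState M π h s * π h s a| ≤
      dState M πE h s * |πE h s a - π h s a|
        + |dState M πE h s - dState M π h s| * π h s a := by
    intro a
    have : dState M πE h s * πE h s a - dState M π h s * π h s a
        = dState M πE h s * (πE h s a - π h s a)
          + (dState M πE h s - dState M π h s) * π h s a := by ring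
    rw [this]
    refine (abs_add_le _ _).trans ?_
    rw [abs_mul, abs_mul, abs_of_nonneg (hEnn h s), abs_of_nonneg (hπ.1 h s a)]
  calc ∑ a, |dState M πE h s * πE h s a - dState M π h s * π h s a|
      ≤ ∑ a, (dState M πE h s * |πE h s a - π h s a|
          + |dState M πE h s - dState M π h s| * π h s a) :=
        Finset.sum_le_sum fun a _ => key a
    _ = dState M πE h s * (∑ a, |πE h s a - π h s a|)
          + |dState M πE h s - dState M π h s| * (∑ a, π h s a) := by
        rw [Finset.sum_add_distrib, Finset.mul_sum, Finset.mul_sum]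
    _ = 2 * (dState M πE h s * (1 - π h s (aE h s)))
          + |dState M πE h s - dState M π h s| := by
        have : ∑ a, |πE h s a - π h s a| = 2 * (1 - π h s (aE h s)) := by
          rw [Finset.sum_congr rfl fun a _ => by rw [hdet h s a]]
          exact abs_sum_det π aE h s hπ
        rw [this, hπ.2 h s, mul_one]; ring

lemma tv_step (M : MDP S A) (πE π : ℕ → S → A → ℝ) (h : ℕ) :
    ∑ s', |dState M πE (h+1) s' - dState M π (h+1) s'| ≤
      ∑ s, ∑ a, |dState M πE h s * πE h s a - dState M π h s * π h s a| := by
  calc ∑ s', |dState M πE (h+1) s' - dState M π (h+1) s'|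
      = ∑ s', |∑ s, ∑ a, (dState M πE h s * πE h s a
          - dState M π h s * π h s a) * M.P h s a s'| := by
        refine Finset.sum_congr rfl fun s' _ => ?_
        congr 1
        show (∑ s, ∑ a, dState M πE h s * πE h s a * M.P h s a s')
            - (∑ s, ∑ a, dState M π h s * π h s a * M.P h s a s') = _
        rw [← Finset.sum_sub_distrib]
        refine Finset.sum_congr rfl fun s _ => ?_
        rw [← Finset.sum_sub_distrib]
        refine Finset.sum_congr rfl fun a _ => by ring
    _ ≤ ∑ s', ∑ s, ∑ a, |dState M πE h s * πE h s a
          - dState M π h s * π h s a| * M.P h s a s' := by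
        refine Finset.sum_le_sum fun s' _ => ?_
        refine (Finset.abs_sum_le_sum_abs _ _).trans ?_
        refine Finset.sum_le_sum fun s _ => ?_
        refine (Finset.abs_sum_le_sum_abs _ _).trans ?_
        refine Finset.sum_le_sum fun a _ => ?_
        rw [abs_mul, abs_of_nonneg (M.P_nonneg h s a s')]
    _ = ∑ s, ∑ a, |dState M πE h s * πE h s a - dState M π h s * π h s a|
          * ∑ s', M.P h s a s' := by
        rw [Finset.sum_comm]
        refine Finset.sum_congr rfl fun s _ => ?_
        rw [Finset.sum_comm]
        refine Finset.sum_congr rfl fun a _ => ?_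
        rw [Finset.mul_sum]
    _ = _ := by
        refine Finset.sum_congr rfl fun s _ => Finset.sum_congr rfl fun a _ => ?_
        rw [M.P_sum, mul_one]

lemma eps_nonneg (M : MDP S A) (πE π : ℕ → S → A → ℝ) (aE : ℕ → S → A)
    (hdet : ∀ h s a, πE h s a = if a = aE h s then 1 else 0)
    (hπ : IsPolicy π) (h : ℕ) :
    0 ≤ ∑ s, dState M πE h s * (1 - π h s (aE h s)) := by
  refine Finset.sum_nonneg fun s _ => mul_nonneg
    (dState_nonneg M πE (det_is_policy πE aE hdet).1 h s) ?_
  have : π h s (aE h s) ≤ 1 := by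
    rw [← hπ.2 h s]
    exact Finset.single_le_sum (fun a _ => hπ.1 h s a) (Finset.mem_univ _)
  linarith

lemma tv_bound (M : MDP S A) (πE π : ℕ → S → A → ℝ) (aE : ℕ → S → A)
    (hdet : ∀ h s a, πE h s a = if a = aE h s then 1 else 0)
    (hπ : IsPolicy π) (h : ℕ) :
    ∑ s, |dState M πE h s - dState M π h s| ≤
      2 * ∑ t ∈ Finset.range h, ∑ s, dState M πE t s * (1 - π t s (aE t s)) := by
  induction h with
  | zero => simp [dState]
  | succ h ih =>
    calc ∑ s, |dState M πE (h+1) s - dState M π (h+1) s|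
        ≤ ∑ s, ∑ a, |dState M πE h s * πE h s a - dState M π h s * π h s a| :=
          tv_step M πE π h
      _ ≤ 2 * (∑ s, dState M πE h s * (1 - π h s (aE h s)))
            + ∑ s, |dState M πE h s - dState M π h s| :=
          sa_abs_bound M πE π aE hdet hπ h
      _ ≤ 2 * (∑ s, dState M πE h s * (1 - π h s (aE h s)))
            + 2 * ∑ t ∈ Finset.range h, ∑ s, dState M πE t s * (1 - π t s (aE t s)) := by
          linarith
      _ = _ := by rw [Finset.sum_range_succ]; ring

end AuxPD

/-- **Policy difference bound for a deterministic expert.**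
If `π^E` is a deterministic policy taking expert action `a^E_h(s)` at state `s` and step
`h`, then for any policy `π`,
`V(π^E) − V(π) ≤ H · Σ_h Σ_s d^{π^E}_h(s) (1 − π_h(a^E_h(s)|s))`. -/
theorem deterministic_expert_policy_difference
    (M : MDP S A) (πE π : ℕ → S → A → ℝ) (aE : ℕ → S → A)
    (hdet : ∀ h s a, πE h s a = if a = aE h s then 1 else 0)
    (hπ : IsPolicy π) :
    value M πE - value M π ≤
      (M.H : ℝ) * ∑ h ∈ Finset.range M.H, ∑ s,
        dState M πE h s * (1 - π h s (aE h s)) := by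
  
  classical
  set ε : ℕ → ℝ := fun t => ∑ s, dState M πE t s * (1 - π t s (aE t s)) with hε
  have hEpol := det_is_policy πE aE hdet
  have hεnn : ∀ t, 0 ≤ ε t := fun t => eps_nonneg M πE π aE hdet hπ t
  have hεsum : ∀ h, h ≤ M.H → ∑ t ∈ Finset.range h, ε t ≤ ∑ t ∈ Finset.range M.H, ε t := by
    intro h hh
    exact Finset.sum_le_sum_of_subset_of_nonneg
      (Finset.range_subset_range.2 hh) (fun t _ _ => hεnn t)
  -- per-step bound
  have step : ∀ h, h < M.H →
      (∑ s, ∑ a, dSA M πE h s a * M.r h s a) - (∑ s, ∑ a, dSA M π h s a * M.r h s a)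
        ≤ ∑ t ∈ Finset.range M.H, ε t := by
    intro h hh
    have hsum1 : ∑ s, ∑ a, dSA M πE h s a = 1 := by
      have := dState_sum_one M πE hEpol.2 h
      calc ∑ s, ∑ a, dSA M πE h s a = ∑ s, dState M πE h s := by
            refine Finset.sum_congr rfl fun s _ => ?_
            simp only [dSA, ← Finset.mul_sum, hEpol.2 h s, mul_one]
        _ = 1 := this
    have hsum2 : ∑ s, ∑ a, dSA M π h s a = 1 := by
      have := dState_sum_one M π hπ.2 h
      calc ∑ s, ∑ a, dSA M π h s a = ∑ s, dState M π h s := by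
            refine Finset.sum_congr rfl fun s _ => ?_
            simp only [dSA, ← Finset.mul_sum, hπ.2 h s, mul_one]
        _ = 1 := this
    have key : (∑ s, ∑ a, dSA M πE h s a * M.r h s a)
        - (∑ s, ∑ a, dSA M π h s a * M.r h s a)
        = ∑ s, ∑ a, (dSA M πE h s a - dSA M π h s a) * (M.r h s a - 1/2) := by
      have expand : ∑ s, ∑ a, (dSA M πE h s a - dSA M π h s a) * (M.r h s a - 1/2)
          = (∑ s, ∑ a, dSA M πE h s a * M.r h s a)
            - (∑ s, ∑ a, dSA M π h s a * M.r h s a)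
            - (1/2) * ((∑ s, ∑ a, dSA M πE h s a) - (∑ s, ∑ a, dSA M π h s a)) := by
        have e1 : ∑ s, ∑ a, (dSA M πE h s a - dSA M π h s a) * (M.r h s a - 1/2)
            = ∑ s, ∑ a, (dSA M πE h s a * M.r h s a - dSA M π h s a * M.r h s a
                - (1/2) * dSA M πE h s a + (1/2) * dSA M π h s a) :=
          Finset.sum_congr rfl fun s _ => Finset.sum_congr rfl fun a _ => by ring
        rw [e1]
        simp only [Finset.sum_add_distrib, Finset.sum_sub_distrib, ← Finset.mul_sum]
        ring
      rw [expand, hsum1, hsum2]; ring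
    rw [key]
    have habs : ∑ s, ∑ a, (dSA M πE h s a - dSA M π h s a) * (M.r h s a - 1/2)
        ≤ ∑ s, ∑ a, |dSA M πE h s a - dSA M π h s a| * (1/2) := by
      refine Finset.sum_le_sum fun s _ => Finset.sum_le_sum fun a _ => ?_
      calc (dSA M πE h s a - dSA M π h s a) * (M.r h s a - 1/2)
          ≤ |(dSA M πE h s a - dSA M π h s a) * (M.r h s a - 1/2)| := le_abs_self _
        _ = |dSA M πE h s a - dSA M π h s a| * |M.r h s a - 1/2| := abs_mul _ _
        _ ≤ |dSA M πE h s a - dSA M π h s a| * (1/2) := by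
            refine mul_le_mul_of_nonneg_left ?_ (abs_nonneg _)
            rw [abs_le]
            constructor <;> [linarith [M.r_nonneg h s a]; linarith [M.r_le_one h s a]]
    refine habs.trans ?_
    have : ∑ s, ∑ a, |dSA M πE h s a - dSA M π h s a| * (1/2)
        = (1/2) * ∑ s, ∑ a, |dSA M πE h s a - dSA M π h s a| := by
      rw [Finset.mul_sum]
      refine Finset.sum_congr rfl fun s _ => ?_
      rw [Finset.mul_sum]
      exact Finset.sum_congr rfl fun a _ => by ring
    rw [this]
    have hsa : ∑ s, ∑ a, |dSA M πE h s a - dSA M π h s a| ≤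
        2 * ε h + 2 * ∑ t ∈ Finset.range h, ε t := by
      refine (sa_abs_bound M πE π aE hdet hπ h).trans ?_
      have := tv_bound M πE π aE hdet hπ h
      simp only [hε, dSA]
      linarith
    calc (1/2) * ∑ s, ∑ a, |dSA M πE h s a - dSA M π h s a|
        ≤ (1/2) * (2 * ε h + 2 * ∑ t ∈ Finset.range h, ε t) := by linarith
      _ = ∑ t ∈ Finset.range (h+1), ε t := by rw [Finset.sum_range_succ]; ring
      _ ≤ ∑ t ∈ Finset.range M.H, ε t := hεsum (h+1) hh
  have : value M πE - value M π
      = ∑ h ∈ Finset.range M.H, ((∑ s, ∑ a, dSA M πE h s a * M.r h s a)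
          - (∑ s, ∑ a, dSA M π h s a * M.r h s a)) := by
    rw [value, value, ← Finset.sum_sub_distrib]
  rw [this]
  calc ∑ h ∈ Finset.range M.H, ((∑ s, ∑ a, dSA M πE h s a * M.r h s a)
          - (∑ s, ∑ a, dSA M π h s a * M.r h s a))
      ≤ ∑ h ∈ Finset.range M.H, ∑ t ∈ Finset.range M.H, ε t :=
        Finset.sum_le_sum fun h hh => step h (Finset.mem_range.1 hh)
    _ = (M.H : ℝ) * ∑ t ∈ Finset.range M.H, ε t := by
        rw [Finset.sum_const, Finset.card_range, nsmul_eq_mul]
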